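/- Let X ∈ ℝ^{p×m} and Y ∈ ℝ^{p×n} be real matrices, let h ≥ m, and let P : ℝ^p → ℝ^p be the orthogonal projection onto the column space of X. Suppose c_X ≥ 0 satisfies ‖Xᵀv‖ ≥ c_X‖Pv‖ for all v ∈ ℝ^p. Let W₁ ∈ ℝ^{m×h} and W₂ ∈ ℝ^{h×n}, and suppose c₁, c₂ ≥ 0 satisfy ‖W₁ᵀx‖ ≥ c₁‖x‖ for all x ∈ ℝ^m and ‖W₂y‖ ≥ c₂‖y‖ for all y ∈ ℝ^n. Set R := XW₁W₂ − Y and L(W₁,W₂) := (1/2)‖R‖_F². Then ‖XᵀRW₂ᵀ‖_F² + ‖W₁ᵀXᵀR‖_F² ≥ 2(c₁² + c₂²)c_X²·( L(W₁,W₂) − inf_{W₁′∈ℝ^{m×h}, W₂′∈ℝ^{h×n}} (1/2)‖XW₁′W₂′ − Y‖_F² ). Moreover, since h ≥ m, the infimum over factored pairs equals inf_{W∈ℝ^{m×n}} (1/2)‖XW − Y‖_F². -/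

import Mathlib

open Matrix

/-- Squared Frobenius norm `‖M‖_F² = Σᵢⱼ Mᵢⱼ²` of a real matrix. -/
noncomputable def frobSq {p q : ℕ} (M : Matrix (Fin p) (Fin q) ℝ) : ℝ :=
  ∑ i, ∑ j, (M i j) ^ 2

namespace Stmt9Aux

noncomputable def col {p q : ℕ} (M : Matrix (Fin p) (Fin q) ℝ) (j : Fin q) :
    EuclideanSpace ℝ (Fin p) := (WithLp.equiv 2 _).symm (fun i => M i j)

lemma col_apply {p q : ℕ} (M : Matrix (Fin p) (Fin q) ℝ) (j : Fin q) (i : Fin p) :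
    col M j i = M i j := rfl

lemma normSq_eucl {p : ℕ} (x : EuclideanSpace ℝ (Fin p)) : ‖x‖ ^ 2 = ∑ i, (x i) ^ 2 := by
  rw [EuclideanSpace.norm_eq, Real.sq_sqrt (by positivity)]
  simp [Real.norm_eq_abs, sq_abs]

lemma frobSq_eq {p q : ℕ} (M : Matrix (Fin p) (Fin q) ℝ) :
    frobSq M = ∑ j, ‖col M j‖ ^ 2 := by
  simp only [frobSq, normSq_eucl, col_apply]
  exact Finset.sum_comm

lemma frobSq_transpose {p q : ℕ} (M : Matrix (Fin p) (Fin q) ℝ) :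
    frobSq Mᵀ = frobSq M := by
  simp only [frobSq, transpose_apply]
  exact Finset.sum_comm

lemma col_mul {p q r : ℕ} (A : Matrix (Fin p) (Fin q) ℝ) (M : Matrix (Fin q) (Fin r) ℝ)
    (j : Fin r) : col (A * M) j = Matrix.toEuclideanLin A (col M j) := by
  rw [col, col, WithLp.equiv_symm_apply, WithLp.equiv_symm_apply, Matrix.toEuclideanLin_apply_piLp_toLp]
  congr 1

lemma col_sub {p q : ℕ} (M N : Matrix (Fin p) (Fin q) ℝ) (j : Fin q) :
    col (M - N) j = col M j - col N j := rfl

lemma le_frobSq_mul {a b q : ℕ} {c : ℝ} (hc : 0 ≤ c) (A : Matrix (Fin a) (Fin b) ℝ)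
    (hA : ∀ x : EuclideanSpace ℝ (Fin b), c * ‖x‖ ≤ ‖Matrix.toEuclideanLin A x‖)
    (M : Matrix (Fin b) (Fin q) ℝ) : c ^ 2 * frobSq M ≤ frobSq (A * M) := by
  rw [frobSq_eq M, frobSq_eq (A * M), Finset.mul_sum]
  refine Finset.sum_le_sum fun j _ => ?_
  rw [col_mul]
  calc c ^ 2 * ‖col M j‖ ^ 2 = (c * ‖col M j‖) ^ 2 := by ring
    _ ≤ ‖Matrix.toEuclideanLin A (col M j)‖ ^ 2 :=
        pow_le_pow_left₀ (by positivity) (hA _) 2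

lemma pyth {p : ℕ} (S : Submodule ℝ (EuclideanSpace ℝ (Fin p))) [S.HasOrthogonalProjection]
    (v : EuclideanSpace ℝ (Fin p)) :
    ‖v‖ ^ 2 = ‖(Submodule.orthogonalProjectionOnto S v : EuclideanSpace ℝ (Fin p))‖ ^ 2
      + ‖v - Submodule.orthogonalProjectionOnto S v‖ ^ 2 := by
  have h : (inner ℝ ((Submodule.orthogonalProjectionOnto S v : EuclideanSpace ℝ (Fin p)))
      (v - Submodule.orthogonalProjectionOnto S v) : ℝ) = 0 := by
    rw [real_inner_comm]
    exact Submodule.starProjection_inner_eq_zero v _ (Submodule.orthogonalProjectionOnto S v).2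
  calc ‖v‖ ^ 2 = ‖(Submodule.orthogonalProjectionOnto S v : EuclideanSpace ℝ (Fin p))
        + (v - Submodule.orthogonalProjectionOnto S v)‖ ^ 2 := by rw [add_sub_cancel]
    _ = _ := by rw [norm_add_sq_real, h]; ring

lemma decomp {p m n : ℕ} (X : Matrix (Fin p) (Fin m) ℝ) (Y : Matrix (Fin p) (Fin n) ℝ)
    (W : Matrix (Fin m) (Fin n) ℝ) :
    frobSq (X * W - Y) =
      (∑ j, ‖(Submodule.orthogonalProjectionOnto (LinearMap.range (Matrix.toEuclideanLin X))
          (col (X * W - Y) j) : EuclideanSpace ℝ (Fin p))‖ ^ 2)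
      + ∑ j, ‖(col Y j : EuclideanSpace ℝ (Fin p)) -
          Submodule.orthogonalProjectionOnto (LinearMap.range (Matrix.toEuclideanLin X)) (col Y j)‖ ^ 2 := by
  rw [frobSq_eq, ← Finset.sum_add_distrib]
  refine Finset.sum_congr rfl fun j _ => ?_
  have h1 : col (X * W - Y) j = Matrix.toEuclideanLin X (col W j) - col Y j := by
    rw [col_sub, col_mul]
  have hm : Matrix.toEuclideanLin X (col W j)
      ∈ LinearMap.range (Matrix.toEuclideanLin X) := LinearMap.mem_range_self _ _
  have h2 : (Submodule.orthogonalProjectionOnto (LinearMap.range (Matrix.toEuclideanLin X))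
        (col (X * W - Y) j) : EuclideanSpace ℝ (Fin p))
      = Matrix.toEuclideanLin X (col W j)
        - Submodule.orthogonalProjectionOnto (LinearMap.range (Matrix.toEuclideanLin X)) (col Y j) := by
    rw [h1, map_sub, Submodule.coe_sub, Submodule.coe_orthogonalProjectionOnto_apply _ (Matrix.toEuclideanLin X (col W j)),
    Submodule.starProjection_eq_self_iff.mpr hm]
  have hv : col (X * W - Y) j
        - (Submodule.orthogonalProjectionOnto (LinearMap.range (Matrix.toEuclideanLin X))
            (col (X * W - Y) j) : EuclideanSpace ℝ (Fin p))
      = -((col Y j : EuclideanSpace ℝ (Fin p))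
          - Submodule.orthogonalProjectionOnto (LinearMap.range (Matrix.toEuclideanLin X)) (col Y j)) := by
    rw [h2, h1]; abel
  rw [pyth (LinearMap.range (Matrix.toEuclideanLin X)) (col (X * W - Y) j), hv, norm_neg]

end Stmt9Aux

/-- **Joint PL inequality along the trajectory (Lemma 2 / Theorem thm:1).**
For the two-layer least-squares loss `L(W₁,W₂) = ½‖XW₁W₂ - Y‖_F²` with `h ≥ m`,
if `c_X` lower bounds the nonzero singular values of `X` (via `‖Xᵀv‖ ≥ c_X‖Pv‖` with `P`
the orthogonal projection onto the column space of `X`), `c₁` lower bounds the singular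
values of `W₁` (via `‖W₁ᵀx‖ ≥ c₁‖x‖`) and `c₂` those of `W₂` (via `‖W₂y‖ ≥ c₂‖y‖`), then
`‖∇_{W₁}L‖_F² + ‖∇_{W₂}L‖_F² ≥ 2(c₁² + c₂²)c_X² (L(W₁,W₂) - inf L)`, where
`∇_{W₁}L = XᵀRW₂ᵀ`, `∇_{W₂}L = W₁ᵀXᵀR`, `R = XW₁W₂ - Y`; moreover the infimum over
factored pairs equals the infimum over full matrices `W ∈ ℝ^{m×n}`. -/
theorem stmt_9 {p m n h : ℕ} (hmh : m ≤ h)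
    (X : Matrix (Fin p) (Fin m) ℝ) (Y : Matrix (Fin p) (Fin n) ℝ)
    (cX c₁ c₂ : ℝ) (hcX : 0 ≤ cX) (hc₁ : 0 ≤ c₁) (hc₂ : 0 ≤ c₂)
    (hX : ∀ v : EuclideanSpace ℝ (Fin p),
      cX * ‖(Submodule.orthogonalProjectionOnto (LinearMap.range (Matrix.toEuclideanLin X)) v :
        EuclideanSpace ℝ (Fin p))‖ ≤ ‖Matrix.toEuclideanLin Xᵀ v‖)
    (W₁ : Matrix (Fin m) (Fin h) ℝ) (W₂ : Matrix (Fin h) (Fin n) ℝ)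
    (hW₁ : ∀ x : EuclideanSpace ℝ (Fin m), c₁ * ‖x‖ ≤ ‖Matrix.toEuclideanLin W₁ᵀ x‖)
    (hW₂ : ∀ y : EuclideanSpace ℝ (Fin n), c₂ * ‖y‖ ≤ ‖Matrix.toEuclideanLin W₂ y‖) :
    2 * (c₁ ^ 2 + c₂ ^ 2) * cX ^ 2 *
        (1 / 2 * frobSq (X * W₁ * W₂ - Y) -
          ⨅ q : Matrix (Fin m) (Fin h) ℝ × Matrix (Fin h) (Fin n) ℝ,
            1 / 2 * frobSq (X * q.1 * q.2 - Y)) ≤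
      frobSq (Xᵀ * (X * W₁ * W₂ - Y) * W₂ᵀ) + frobSq (W₁ᵀ * Xᵀ * (X * W₁ * W₂ - Y)) ∧
    (⨅ q : Matrix (Fin m) (Fin h) ℝ × Matrix (Fin h) (Fin n) ℝ,
        1 / 2 * frobSq (X * q.1 * q.2 - Y)) =
      ⨅ W : Matrix (Fin m) (Fin n) ℝ, 1 / 2 * frobSq (X * W - Y) := by
  classical
  set Lsum : ℝ := ∑ j, ‖(Stmt9Aux.col Y j : EuclideanSpace ℝ (Fin p)) -
      Submodule.orthogonalProjectionOnto (LinearMap.range (Matrix.toEuclideanLin X))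
        (Stmt9Aux.col Y j)‖ ^ 2 with hLsum
  -- lower bound for every W
  have hlow : ∀ W : Matrix (Fin m) (Fin n) ℝ,
      1 / 2 * Lsum ≤ 1 / 2 * frobSq (X * W - Y) := by
    intro W
    have hd := Stmt9Aux.decomp X Y W
    have h0 : 0 ≤ ∑ j, ‖(Submodule.orthogonalProjectionOnto (LinearMap.range (Matrix.toEuclideanLin X))
        (Stmt9Aux.col (X * W - Y) j) :
        EuclideanSpace ℝ (Fin p))‖ ^ 2 := Finset.sum_nonneg fun j _ => sq_nonneg _
    rw [← hLsum] at hd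
    linarith
  -- attaining W₀
  obtain ⟨W₀, hW₀⟩ : ∃ W₀ : Matrix (Fin m) (Fin n) ℝ,
      ∀ j, Matrix.toEuclideanLin X (Stmt9Aux.col W₀ j)
        = (Submodule.orthogonalProjectionOnto (LinearMap.range (Matrix.toEuclideanLin X))
            (Stmt9Aux.col Y j) : EuclideanSpace ℝ (Fin p)) := by
    choose w hw using fun j : Fin n => LinearMap.mem_range.mp
      (Submodule.orthogonalProjectionOnto (LinearMap.range (Matrix.toEuclideanLin X))
        (Stmt9Aux.col Y j)).2
    exact ⟨fun i j => w j i, fun j => hw j⟩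
  have hW₀val : 1 / 2 * frobSq (X * W₀ - Y) = 1 / 2 * Lsum := by
    have hd := Stmt9Aux.decomp X Y W₀
    rw [← hLsum] at hd
    have hz : ∀ j : Fin n, (Submodule.orthogonalProjectionOnto (LinearMap.range (Matrix.toEuclideanLin X))
        (Stmt9Aux.col (X * W₀ - Y) j) : EuclideanSpace ℝ (Fin p)) = 0 := by
      intro j
      have h1 : Stmt9Aux.col (X * W₀ - Y) j
          = -((Stmt9Aux.col Y j : EuclideanSpace ℝ (Fin p))
              - Submodule.orthogonalProjectionOnto (LinearMap.range (Matrix.toEuclideanLin X))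
                  (Stmt9Aux.col Y j)) := by
        rw [Stmt9Aux.col_sub, Stmt9Aux.col_mul, hW₀ j]; abel
      have hmem : Stmt9Aux.col (X * W₀ - Y) j
          ∈ (LinearMap.range (Matrix.toEuclideanLin X))ᗮ := by
        rw [h1]
        exact Submodule.neg_mem _ (Submodule.sub_starProjection_mem_orthogonal _)
      rw [Submodule.orthogonalProjectionOnto_apply_of_mem_orthogonal hmem]
      rfl
    rw [hd]
    simp [hz]
  -- infimum over single matrices
  have hbdd : BddBelow (Set.range fun W : Matrix (Fin m) (Fin n) ℝ =>
      1 / 2 * frobSq (X * W - Y)) :=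
    ⟨1 / 2 * Lsum, Set.forall_mem_range.mpr hlow⟩
  have hinfW : (⨅ W : Matrix (Fin m) (Fin n) ℝ, 1 / 2 * frobSq (X * W - Y))
      = 1 / 2 * Lsum :=
    le_antisymm (hW₀val ▸ ciInf_le hbdd W₀) (le_ciInf hlow)
  -- infimum over pairs
  have hlowP : ∀ q : Matrix (Fin m) (Fin h) ℝ × Matrix (Fin h) (Fin n) ℝ,
      1 / 2 * Lsum ≤ 1 / 2 * frobSq (X * q.1 * q.2 - Y) := fun q => by
    rw [Matrix.mul_assoc]; exact hlow _
  have hbddP : BddBelow (Set.range fun q : Matrix (Fin m) (Fin h) ℝ ×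
      Matrix (Fin h) (Fin n) ℝ => 1 / 2 * frobSq (X * q.1 * q.2 - Y)) :=
    ⟨1 / 2 * Lsum, Set.forall_mem_range.mpr hlowP⟩
  have hEW : ∃ q : Matrix (Fin m) (Fin h) ℝ × Matrix (Fin h) (Fin n) ℝ,
      q.1 * q.2 = W₀ := by
    refine ⟨⟨fun i j => if (j : ℕ) = (i : ℕ) then 1 else 0,
      fun j k => if hj : (j : ℕ) < m then W₀ ⟨j, hj⟩ k else 0⟩, ?_⟩
    ext i k
    rw [Matrix.mul_apply]
    rw [Finset.sum_eq_single (⟨(i : ℕ), lt_of_lt_of_le i.2 hmh⟩ : Fin h)]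
    · simp [i.2]
    · intro b _ hb
      have hne : (b : ℕ) ≠ (i : ℕ) := fun hbe => hb (Fin.ext hbe)
      simp [hne]
    · intro habs; exact absurd (Finset.mem_univ _) habs
  obtain ⟨q₀, hq₀⟩ := hEW
  have hinfP : (⨅ q : Matrix (Fin m) (Fin h) ℝ × Matrix (Fin h) (Fin n) ℝ,
      1 / 2 * frobSq (X * q.1 * q.2 - Y)) = 1 / 2 * Lsum := by
    refine le_antisymm ?_ (le_ciInf hlowP)
    have hle := ciInf_le hbddP q₀
    rw [Matrix.mul_assoc, hq₀, hW₀val] at hle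
    exact hle
  constructor
  · -- main inequality
    have hRdef : X * W₁ * W₂ - Y = X * (W₁ * W₂) - Y := by rw [Matrix.mul_assoc]
    set PS : ℝ := ∑ j, ‖(Submodule.orthogonalProjectionOnto (LinearMap.range (Matrix.toEuclideanLin X))
        (Stmt9Aux.col (X * W₁ * W₂ - Y) j) :
        EuclideanSpace ℝ (Fin p))‖ ^ 2 with hPS
    have hLdiff : 1 / 2 * frobSq (X * W₁ * W₂ - Y) -
        (⨅ q : Matrix (Fin m) (Fin h) ℝ × Matrix (Fin h) (Fin n) ℝ,
          1 / 2 * frobSq (X * q.1 * q.2 - Y)) = 1 / 2 * PS := by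
      rw [hinfP]
      have hd := Stmt9Aux.decomp X Y (W₁ * W₂)
      rw [← hRdef, ← hLsum, ← hPS] at hd
      linarith
    have step1 : cX ^ 2 * PS ≤ frobSq (Xᵀ * (X * W₁ * W₂ - Y)) := by
      rw [hPS, Stmt9Aux.frobSq_eq (Xᵀ * (X * W₁ * W₂ - Y)), Finset.mul_sum]
      refine Finset.sum_le_sum fun j _ => ?_
      rw [Stmt9Aux.col_mul]
      calc cX ^ 2 * ‖(Submodule.orthogonalProjectionOnto (LinearMap.range (Matrix.toEuclideanLin X))
            (Stmt9Aux.col (X * W₁ * W₂ - Y) j) : EuclideanSpace ℝ (Fin p))‖ ^ 2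
          = (cX * ‖(Submodule.orthogonalProjectionOnto (LinearMap.range (Matrix.toEuclideanLin X))
            (Stmt9Aux.col (X * W₁ * W₂ - Y) j) : EuclideanSpace ℝ (Fin p))‖) ^ 2 := by ring
        _ ≤ ‖Matrix.toEuclideanLin Xᵀ (Stmt9Aux.col (X * W₁ * W₂ - Y) j)‖ ^ 2 :=
            pow_le_pow_left₀ (by positivity) (hX _) 2
    have step2 : c₁ ^ 2 * frobSq (Xᵀ * (X * W₁ * W₂ - Y))
        ≤ frobSq (W₁ᵀ * Xᵀ * (X * W₁ * W₂ - Y)) := by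
      rw [Matrix.mul_assoc W₁ᵀ Xᵀ (X * W₁ * W₂ - Y)]
      exact Stmt9Aux.le_frobSq_mul hc₁ W₁ᵀ hW₁ _
    have step3 : c₂ ^ 2 * frobSq (Xᵀ * (X * W₁ * W₂ - Y))
        ≤ frobSq (Xᵀ * (X * W₁ * W₂ - Y) * W₂ᵀ) := by
      have hmul := Stmt9Aux.le_frobSq_mul hc₂ W₂ hW₂ (Xᵀ * (X * W₁ * W₂ - Y))ᵀ
      rw [Stmt9Aux.frobSq_transpose] at hmul
      rw [← Stmt9Aux.frobSq_transpose (Xᵀ * (X * W₁ * W₂ - Y) * W₂ᵀ), Matrix.transpose_mul,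
        Matrix.transpose_transpose]
      exact hmul
    rw [hLdiff]
    calc 2 * (c₁ ^ 2 + c₂ ^ 2) * cX ^ 2 * (1 / 2 * PS)
        = (c₁ ^ 2 + c₂ ^ 2) * (cX ^ 2 * PS) := by ring
      _ ≤ (c₁ ^ 2 + c₂ ^ 2) * frobSq (Xᵀ * (X * W₁ * W₂ - Y)) :=
          mul_le_mul_of_nonneg_left step1 (by positivity)
      _ = c₂ ^ 2 * frobSq (Xᵀ * (X * W₁ * W₂ - Y))
          + c₁ ^ 2 * frobSq (Xᵀ * (X * W₁ * W₂ - Y)) := by ring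
      _ ≤ frobSq (Xᵀ * (X * W₁ * W₂ - Y) * W₂ᵀ)
          + frobSq (W₁ᵀ * Xᵀ * (X * W₁ * W₂ - Y)) := add_le_add step3 step2
  · rw [hinfP, hinfW]
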